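/- Let (Ω, μ) be a measure space, 1 < p < ∞ and q the conjugate exponent with 1/p + 1/q = 1. If f ∈ L_p(μ) with ‖f‖_p = 1 and g ∈ L_q(μ) with ‖g‖_q = 1, then ‖g⁺‖_q · ‖f⁺‖_p + ‖g⁻‖_q · ‖f⁻‖_p ≤ 1. -/

import Mathlib

open MeasureTheory
open scoped ENNReal

lemma aux_norm_split {Ω : Type*} [MeasurableSpace Ω] {μ : Measure Ω} {r : ℝ≥0∞}
    [Fact (1 ≤ r)] (hr : r ≠ ⊤) (h : Lp ℝ r μ) :
    ‖h ⊔ 0‖ ^ r.toReal + ‖(-h) ⊔ 0‖ ^ r.toReal = ‖h‖ ^ r.toReal := by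
  have hr1 : (1 : ℝ≥0∞) ≤ r := Fact.out
  have hr0 : r ≠ 0 := by positivity
  have hrt : (0 : ℝ) < r.toReal := ENNReal.toReal_pos hr0 hr
  simp only [Lp.norm_def]
  rw [ENNReal.toReal_rpow, ENNReal.toReal_rpow, ENNReal.toReal_rpow,
    ← ENNReal.toReal_add (ENNReal.rpow_ne_top_of_nonneg hrt.le (Lp.eLpNorm_ne_top _))
      (ENNReal.rpow_ne_top_of_nonneg hrt.le (Lp.eLpNorm_ne_top _))]
  congr 1
  rw [eLpNorm_eq_lintegral_rpow_enorm_toReal hr0 hr, eLpNorm_eq_lintegral_rpow_enorm_toReal hr0 hr,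
    eLpNorm_eq_lintegral_rpow_enorm_toReal hr0 hr, ← ENNReal.rpow_mul, ← ENNReal.rpow_mul,
    ← ENNReal.rpow_mul, one_div, inv_mul_cancel₀ hrt.ne', ENNReal.rpow_one,
    ENNReal.rpow_one, ENNReal.rpow_one]
  rw [← lintegral_add_left' (((Lp.aestronglyMeasurable (h ⊔ 0)).enorm).pow_const r.toReal)]
  refine lintegral_congr_ae ?_
  filter_upwards [Lp.coeFn_sup h 0, Lp.coeFn_sup (-h) 0, Lp.coeFn_zero ℝ r μ,
    Lp.coeFn_neg h] with x h1 h2 h3 h4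
  rw [h1, h2, Pi.sup_apply, Pi.sup_apply, h3, h4, Pi.zero_apply, Pi.neg_apply]
  rcases le_total 0 (h x) with hx | hx
  · rw [sup_eq_left.2 hx, sup_eq_right.2 (neg_nonpos.2 hx)]
    simp [ENNReal.zero_rpow_of_pos hrt]
  · rw [sup_eq_right.2 hx, sup_eq_left.2 (neg_nonneg.2 hx)]
    simp [ENNReal.zero_rpow_of_pos hrt, nnnorm_neg]

/-- For conjugate exponents `1 < p < ∞` and `q`, if `f ∈ S_{L_p(μ)}` and
`g ∈ S_{L_q(μ)}`, then `‖g⁺‖_q·‖f⁺‖_p + ‖g⁻‖_q·‖f⁻‖_p ≤ 1`. -/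
theorem stmt9 {Ω : Type*} [MeasurableSpace Ω] (μ : Measure Ω)
    (p q : ℝ≥0∞) [Fact (1 ≤ p)] [Fact (1 ≤ q)]
    (hp1 : 1 < p) (hp : p ≠ ⊤) (hpq : 1 / p + 1 / q = 1)
    (f : Lp ℝ p μ) (g : Lp ℝ q μ) (hf : ‖f‖ = 1) (hg : ‖g‖ = 1) :
    ‖g ⊔ 0‖ * ‖f ⊔ 0‖ + ‖(-g) ⊔ 0‖ * ‖(-f) ⊔ 0‖ ≤ 1 := by
  have hq1 : (1 : ℝ≥0∞) ≤ q := Fact.out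
  have hq0 : q ≠ 0 := by positivity
  have hp0 : p ≠ 0 := by positivity
  -- q is finite
  have hpinv : p⁻¹ < 1 := by
    rw [ENNReal.inv_lt_one]; exact hp1
  have hsum : p⁻¹ + q⁻¹ = 1 := by simpa [one_div] using hpq
  have hqinvpos : 0 < q⁻¹ := by
    by_contra hcon
    push_neg at hcon
    have : q⁻¹ = 0 := le_antisymm hcon zero_le
    rw [this, add_zero] at hsum
    exact hpinv.ne hsum
  have hq : q ≠ ⊤ := by
    intro hcon
    rw [hcon] at hqinvpos
    simp at hqinvpos
  have hpt : (1 : ℝ) < p.toReal := by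
    have := (ENNReal.toReal_lt_toReal (by simp) hp).2 hp1
    simpa using this
  have hconj : p.toReal.HolderConjugate q.toReal := by
    rw [Real.holderConjugate_iff]; constructor
    · exact hpt
    · have := congrArg ENNReal.toReal hsum
      rw [ENNReal.toReal_add (by simp [hp0]) (by simp [hq0])] at this
      simpa [ENNReal.toReal_inv, one_div] using this
  have hptr : (0:ℝ) < p.toReal := hconj.pos
  have hqtr : (0:ℝ) < q.toReal := hconj.symm.pos
  have hF := aux_norm_split hp f
  have hG := aux_norm_split hq g
  rw [hf, Real.one_rpow] at hF
  rw [hg, Real.one_rpow] at hG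
  set a := ‖f ⊔ 0‖ with ha
  set b := ‖(-f) ⊔ 0‖ with hb
  set c := ‖g ⊔ 0‖ with hc
  set d := ‖(-g) ⊔ 0‖ with hd
  have ha0 : 0 ≤ a := norm_nonneg _
  have hb0 : 0 ≤ b := norm_nonneg _
  have hc0 : 0 ≤ c := norm_nonneg _
  have hd0 : 0 ≤ d := norm_nonneg _
  have y1 : c * a ≤ c ^ q.toReal / q.toReal + a ^ p.toReal / p.toReal :=
    Real.young_inequality_of_nonneg hc0 ha0 hconj.symm
  have y2 : d * b ≤ d ^ q.toReal / q.toReal + b ^ p.toReal / p.toReal :=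
    Real.young_inequality_of_nonneg hd0 hb0 hconj.symm
  have hsum1 : p.toReal⁻¹ + q.toReal⁻¹ = 1 := hconj.inv_add_inv_eq_one
  have : c * a + d * b ≤ (c ^ q.toReal + d ^ q.toReal) / q.toReal
      + (a ^ p.toReal + b ^ p.toReal) / p.toReal := by
    rw [add_div, add_div]
    linarith
  rw [hG, hF] at this
  calc c * a + d * b ≤ 1 / q.toReal + 1 / p.toReal := this
    _ = 1 := by rw [one_div, one_div]; linarith
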